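/- arXiv:1702.05722 — 2 statements merged into one kernel-verified Lean document; each statement's English description precedes it below -/
import Mathlib

section
/- Let (𝒳, T) be a dynamical system (𝒳 compact metric, T : 𝒳 → 𝒳 continuous) with metric d. For every natural number n, every ε > 0 and every L > 1: (1/n) log #(𝒳, d_n, 2Lε) ≤ log 2 + (1/L) log #(𝒳, d, ε) + (1/n) log #(𝒳, d̄_n, ε), where d_n(x,y) = max_{0≤k<n} d(T^k x, T^k y) and d̄_n(x,y) = (1/n) Σ_{k=0}^{n-1} d(T^k x, T^k y). -/
open Real Filter Set Topology
open scoped NNReal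

/-- Minimal cardinality of a cover of `𝒳` by open sets of `ρ`-diameter less than `ε`. -/
noncomputable def coverNum (𝒳 : Type*) [TopologicalSpace 𝒳] (ρ : 𝒳 → 𝒳 → ℝ) (ε : ℝ) : ℕ :=
  sInf {N : ℕ | ∃ U : Fin N → Set 𝒳, (∀ i, IsOpen (U i)) ∧ (∀ x, ∃ i, x ∈ U i) ∧
    ∀ i, ∀ x ∈ U i, ∀ y ∈ U i, ρ x y < ε}

/-- `d_n(x,y) = max_{0 ≤ k < n} d(T^k x, T^k y)`. -/
noncomputable def bowenMax {𝒳 : Type*} [PseudoMetricSpace 𝒳] (T : 𝒳 → 𝒳) (n : ℕ)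
    (x y : 𝒳) : ℝ :=
  (((Finset.range n).sup fun k => nndist (T^[k] x) (T^[k] y)) : ℝ≥0)

/-- `d̄_n(x,y) = (1/n) Σ_{k=0}^{n-1} d(T^k x, T^k y)`. -/
noncomputable def bowenAvg {𝒳 : Type*} [PseudoMetricSpace 𝒳] (T : 𝒳 → 𝒳) (n : ℕ)
    (x y : 𝒳) : ℝ :=
  (∑ k ∈ Finset.range n, dist (T^[k] x) (T^[k] y)) / n

section Aux

variable {𝒳 : Type*} [MetricSpace 𝒳] [CompactSpace 𝒳]

set_option linter.unusedSectionVars false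

lemma exists_cover (ρ : 𝒳 → 𝒳 → ℝ) (ε : ℝ) (O : 𝒳 → Set 𝒳) (hO : ∀ x, IsOpen (O x))
    (hxO : ∀ x, x ∈ O x) (hd : ∀ x, ∀ y ∈ O x, ∀ z ∈ O x, ρ y z < ε) :
    ∃ N : ℕ, ∃ U : Fin N → Set 𝒳, (∀ i, IsOpen (U i)) ∧ (∀ x, ∃ i, x ∈ U i) ∧
      ∀ i, ∀ x ∈ U i, ∀ y ∈ U i, ρ x y < ε := by
  have hcov : (univ : Set 𝒳) ⊆ ⋃ x, O x := fun x _ => mem_iUnion.2 ⟨x, hxO x⟩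
  obtain ⟨t, ht⟩ := isCompact_univ.elim_finite_subcover O hO hcov
  refine ⟨t.card, fun i => O (t.equivFin.symm i), fun i => hO _, fun x => ?_,
    fun i x hx y hy => hd _ _ hx _ hy⟩
  obtain ⟨a, ha, hxa⟩ := mem_iUnion₂.1 (ht (mem_univ x))
  exact ⟨t.equivFin ⟨a, ha⟩, by simpa using hxa⟩

lemma coverNum_le_card {ρ : 𝒳 → 𝒳 → ℝ} {ε : ℝ} {ι : Type*} [Fintype ι] (U : ι → Set 𝒳)
    (h1 : ∀ i, IsOpen (U i)) (h2 : ∀ x, ∃ i, x ∈ U i)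
    (h3 : ∀ i, ∀ x ∈ U i, ∀ y ∈ U i, ρ x y < ε) :
    coverNum 𝒳 ρ ε ≤ Fintype.card ι := by
  refine Nat.sInf_le ⟨fun j => U ((Fintype.equivFin ι).symm j), fun j => h1 _, fun x => ?_,
    fun j => h3 _⟩
  obtain ⟨i, hi⟩ := h2 x
  exact ⟨Fintype.equivFin ι i, by simpa using hi⟩

lemma coverNum_spec (ρ : 𝒳 → 𝒳 → ℝ) (ε : ℝ)
    (h : ∃ N : ℕ, ∃ U : Fin N → Set 𝒳, (∀ i, IsOpen (U i)) ∧ (∀ x, ∃ i, x ∈ U i) ∧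
      ∀ i, ∀ x ∈ U i, ∀ y ∈ U i, ρ x y < ε) :
    ∃ U : Fin (coverNum 𝒳 ρ ε) → Set 𝒳, (∀ i, IsOpen (U i)) ∧ (∀ x, ∃ i, x ∈ U i) ∧
      ∀ i, ∀ x ∈ U i, ∀ y ∈ U i, ρ x y < ε := by
  have hne : {N : ℕ | ∃ U : Fin N → Set 𝒳, (∀ i, IsOpen (U i)) ∧ (∀ x, ∃ i, x ∈ U i) ∧
      ∀ i, ∀ x ∈ U i, ∀ y ∈ U i, ρ x y < ε}.Nonempty := by
    obtain ⟨N, hN⟩ := h; exact ⟨N, hN⟩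
  exact Nat.sInf_mem hne

lemma coverNum_pos [Nonempty 𝒳] {ρ : 𝒳 → 𝒳 → ℝ} {ε : ℝ}
    (h : ∃ N : ℕ, ∃ U : Fin N → Set 𝒳, (∀ i, IsOpen (U i)) ∧ (∀ x, ∃ i, x ∈ U i) ∧
      ∀ i, ∀ x ∈ U i, ∀ y ∈ U i, ρ x y < ε) : 0 < coverNum 𝒳 ρ ε := by
  obtain ⟨U, _, hcov, _⟩ := coverNum_spec ρ ε h
  obtain ⟨i, _⟩ := hcov (Classical.arbitrary 𝒳)
  exact i.pos

lemma exists_cover_dist {ε : ℝ} (hε : 0 < ε) :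
    ∃ N : ℕ, ∃ U : Fin N → Set 𝒳, (∀ i, IsOpen (U i)) ∧ (∀ x, ∃ i, x ∈ U i) ∧
      ∀ i, ∀ x ∈ U i, ∀ y ∈ U i, dist x y < ε := by
  refine exists_cover dist ε (fun x => Metric.ball x (ε / 3)) (fun x => Metric.isOpen_ball)
    (fun x => Metric.mem_ball_self (by linarith)) (fun x y hy z hz => ?_)
  have h1 := Metric.mem_ball.1 hy
  have h2 := Metric.mem_ball.1 hz
  calc dist y z ≤ dist y x + dist x z := dist_triangle _ _ _
    _ < ε := by have e := dist_comm x z; linarith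

lemma exists_cover_bowenAvg (T : 𝒳 → 𝒳) (hT : Continuous T) (n : ℕ) (hn : 0 < n)
    {ε : ℝ} (hε : 0 < ε) :
    ∃ N : ℕ, ∃ U : Fin N → Set 𝒳, (∀ i, IsOpen (U i)) ∧ (∀ x, ∃ i, x ∈ U i) ∧
      ∀ i, ∀ x ∈ U i, ∀ y ∈ U i, bowenAvg T n x y < ε := by
  refine exists_cover _ ε
    (fun x => ⋂ k : Fin n, T^[(k : ℕ)] ⁻¹' Metric.ball (T^[(k : ℕ)] x) (ε / 3))
    (fun x => isOpen_iInter_of_finite fun k =>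
      ((hT.iterate _).isOpen_preimage _ Metric.isOpen_ball))
    (fun x => mem_iInter.2 fun k => by
      simp only [mem_preimage]; exact Metric.mem_ball_self (by linarith : 0 < ε / 3))
    (fun x y hy z hz => ?_)
  have hterm : ∀ k ∈ Finset.range n, dist (T^[k] y) (T^[k] z) ≤ 2 * ε / 3 := by
    intro k hk
    have hk' : k < n := Finset.mem_range.1 hk
    have h1 := mem_iInter.1 hy ⟨k, hk'⟩
    have h2 := mem_iInter.1 hz ⟨k, hk'⟩
    simp only [mem_preimage, Metric.mem_ball] at h1 h2
    calc dist (T^[k] y) (T^[k] z) ≤ dist (T^[k] y) (T^[k] x) + dist (T^[k] x) (T^[k] z) :=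
        dist_triangle _ _ _
      _ ≤ 2 * ε / 3 := by have e := dist_comm (T^[k] x) (T^[k] z); linarith
  have hsum : (∑ k ∈ Finset.range n, dist (T^[k] y) (T^[k] z)) ≤ n * (2 * ε / 3) := by
    calc (∑ k ∈ Finset.range n, dist (T^[k] y) (T^[k] z)) ≤ ∑ _k ∈ Finset.range n, 2 * ε / 3 :=
        Finset.sum_le_sum hterm
      _ = n * (2 * ε / 3) := by simp [mul_comm]
  have hn' : (0 : ℝ) < n := by exact_mod_cast hn
  rw [bowenAvg, div_lt_iff₀ hn']
  calc (∑ k ∈ Finset.range n, dist (T^[k] y) (T^[k] z)) ≤ n * (2 * ε / 3) := hsum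
    _ < ε * n := by rw [mul_comm]; nlinarith

lemma key_count [Nonempty 𝒳] (T : 𝒳 → 𝒳) (hT : Continuous T) (n : ℕ) (hn : 0 < n)
    (ε L : ℝ) (hε : 0 < ε) (hL : 1 < L) :
    coverNum 𝒳 (bowenMax T n) (2 * L * ε) ≤
      coverNum 𝒳 (bowenAvg T n) ε * 2 ^ n * coverNum 𝒳 dist ε ^ (Nat.floor ((n : ℝ) / L)) := by
  classical
  set K := coverNum 𝒳 dist ε with hKdef
  set M := coverNum 𝒳 (bowenAvg T n) ε with hMdef
  set m := Nat.floor ((n : ℝ) / L) with hmdef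
  obtain ⟨V, hVopen, hVcov, hVdiam⟩ := coverNum_spec (𝒳 := 𝒳) dist ε (exists_cover_dist hε)
  obtain ⟨A, hAopen, hAcov, hAdiam⟩ :=
    coverNum_spec (bowenAvg T n) ε (exists_cover_bowenAvg T hT n hn hε)
  have hK : 0 < K := coverNum_pos (𝒳 := 𝒳) (ρ := dist) (exists_cover_dist hε)
  choose idx hidx using hVcov
  let base : Fin M → 𝒳 := fun j => if h : (A j).Nonempty then h.some else Classical.arbitrary 𝒳
  let FF : (Fin m → Fin K) → ℕ → Fin K := fun f i => if h : i < m then f ⟨i, h⟩ else ⟨0, hK⟩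
  let P : Fin M × {S : Finset (Fin n) // S.card ≤ m} × (Fin m → Fin K) → Set 𝒳 := fun p =>
    A p.1 ∩ ⋂ k : Fin n,
      (if k ∈ p.2.1.1 then T^[(k : ℕ)] ⁻¹' V (FF p.2.2 ((p.2.1.1.sort (· ≤ ·)).idxOf k))
       else {x | dist (T^[(k : ℕ)] (base p.1)) (T^[(k : ℕ)] x) < L * ε})
  have hcard : Fintype.card (Fin M × {S : Finset (Fin n) // S.card ≤ m} × (Fin m → Fin K))
      ≤ M * 2 ^ n * K ^ m := by
    rw [Fintype.card_prod, Fintype.card_prod, Fintype.card_fun, Fintype.card_fin,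
      Fintype.card_fin, Fintype.card_fin, mul_assoc]
    refine Nat.mul_le_mul_left _ (Nat.mul_le_mul_right _ ?_)
    calc Fintype.card {S : Finset (Fin n) // S.card ≤ m}
        ≤ Fintype.card (Finset (Fin n)) := Fintype.card_subtype_le _
      _ = 2 ^ n := by simp [Fintype.card_finset]
  refine le_trans (coverNum_le_card P ?_ ?_ ?_) hcard
  · rintro ⟨j, S, f⟩
    refine (hAopen j).inter (isOpen_iInter_of_finite fun k => ?_)
    by_cases hk : k ∈ S.1
    · simp only [if_pos hk]
      exact (hT.iterate _).isOpen_preimage _ (hVopen _)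
    · simp only [if_neg hk]
      exact isOpen_lt (continuous_const.dist (hT.iterate _)) continuous_const
  · intro x
    obtain ⟨j, hj⟩ := hAcov x
    have hAne : (A j).Nonempty := ⟨x, hj⟩
    have hb : base j ∈ A j := by simp only [base, dif_pos hAne]; exact hAne.some_mem
    have havg : bowenAvg T n (base j) x < ε := hAdiam j _ hb _ hj
    have hn' : (0 : ℝ) < n := by exact_mod_cast hn
    have hsum : ∑ k ∈ Finset.range n, dist (T^[k] (base j)) (T^[k] x) < n * ε := by
      rw [bowenAvg, div_lt_iff₀ hn'] at havg
      linarith [havg]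
    set S : Finset (Fin n) :=
      Finset.univ.filter (fun k : Fin n => ¬ dist (T^[(k : ℕ)] (base j)) (T^[(k : ℕ)] x) < L * ε)
      with hSdef
    have hSsum : (S.card : ℝ) * (L * ε)
        ≤ ∑ k ∈ Finset.range n, dist (T^[k] (base j)) (T^[k] x) := by
      have h1 : ∑ k ∈ Finset.range n, dist (T^[k] (base j)) (T^[k] x)
          = ∑ k : Fin n, dist (T^[(k : ℕ)] (base j)) (T^[(k : ℕ)] x) :=
        (Fin.sum_univ_eq_sum_range _ _).symm
      rw [h1]
      have h2 : S.card • (L * ε) ≤ ∑ k ∈ S, dist (T^[(k : ℕ)] (base j)) (T^[(k : ℕ)] x) :=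
        Finset.card_nsmul_le_sum S _ _ (fun i hi => by
          simp only [hSdef, Finset.mem_filter] at hi; exact not_lt.1 hi.2)
      have h3 : ∑ k ∈ S, dist (T^[(k : ℕ)] (base j)) (T^[(k : ℕ)] x)
          ≤ ∑ k : Fin n, dist (T^[(k : ℕ)] (base j)) (T^[(k : ℕ)] x) :=
        Finset.sum_le_sum_of_subset_of_nonneg (Finset.subset_univ S) (fun i _ _ => dist_nonneg)
      calc (S.card : ℝ) * (L * ε) = S.card • (L * ε) := (nsmul_eq_mul _ _).symm
        _ ≤ _ := h2.trans h3
    have hScard : S.card ≤ m := by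
      rw [hmdef]
      refine Nat.le_floor (le_of_lt ?_)
      have hLpos : (0 : ℝ) < L := by linarith
      rw [lt_div_iff₀ hLpos]
      have h4 : (S.card : ℝ) * L * ε < (n : ℝ) * ε := by
        calc (S.card : ℝ) * L * ε = S.card * (L * ε) := by ring
          _ < (n : ℝ) * ε := lt_of_le_of_lt hSsum hsum
      exact (mul_lt_mul_iff_of_pos_right hε).1 h4
    let lS := S.sort (· ≤ ·)
    let f : Fin m → Fin K := fun i =>
      if h : (i : ℕ) < lS.length then idx (T^[((lS.get ⟨i, h⟩ : Fin n) : ℕ)] x) else ⟨0, hK⟩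
    refine ⟨⟨j, ⟨S, hScard⟩, f⟩, hj, mem_iInter.2 fun k => ?_⟩
    by_cases hk : k ∈ S
    · simp only [if_pos hk, mem_preimage]
      have hmem : k ∈ lS := (Finset.mem_sort _).2 hk
      have hlt : lS.idxOf k < lS.length := List.idxOf_lt_length_iff.2 hmem
      have hltm : lS.idxOf k < m := by
        have h5 := hlt
        rw [Finset.length_sort] at h5
        exact lt_of_lt_of_le h5 hScard
      have hFF : FF f (lS.idxOf k) = idx (T^[(k : ℕ)] x) := by
        simp only [FF, dif_pos hltm, f, dif_pos hlt]
        congr 2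
        have h6 : lS.get ⟨lS.idxOf k, hlt⟩ = k := by
          rw [List.get_eq_getElem]
          exact List.getElem_idxOf hlt
        rw [h6]
      rw [hFF]
      exact hidx _
    · simp only [if_neg hk, mem_setOf_eq]
      by_contra h
      exact hk (by simp only [hSdef, Finset.mem_filter]; exact ⟨Finset.mem_univ k, h⟩)
  · rintro ⟨j, ⟨S, hScard⟩, f⟩ x hx y hy
    obtain ⟨hxA, hxI⟩ := hx
    obtain ⟨hyA, hyI⟩ := hy
    have hkey : ∀ k : Fin n, dist (T^[(k : ℕ)] x) (T^[(k : ℕ)] y) < 2 * L * ε := by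
      intro k
      have h1 := mem_iInter.1 hxI k
      have h2 := mem_iInter.1 hyI k
      by_cases hk : k ∈ S
      · simp only [if_pos hk, mem_preimage] at h1 h2
        have := hVdiam _ _ h1 _ h2
        nlinarith
      · simp only [if_neg hk, mem_setOf_eq] at h1 h2
        have e := dist_comm (T^[(k : ℕ)] (base j)) (T^[(k : ℕ)] x)
        calc dist (T^[(k : ℕ)] x) (T^[(k : ℕ)] y)
            ≤ dist (T^[(k : ℕ)] x) (T^[(k : ℕ)] (base j))
              + dist (T^[(k : ℕ)] (base j)) (T^[(k : ℕ)] y) := dist_triangle _ _ _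
          _ < 2 * L * ε := by linarith
    rw [bowenMax]
    have hpos : (0 : ℝ) < 2 * L * ε := by nlinarith
    have hsup : ((Finset.range n).sup fun k => nndist (T^[k] x) (T^[k] y))
        < Real.toNNReal (2 * L * ε) := by
      rw [Finset.sup_lt_iff (by simpa using Real.toNNReal_pos.2 hpos)]
      intro k hk
      have hk' : k < n := Finset.mem_range.1 hk
      have := hkey ⟨k, hk'⟩
      rw [← NNReal.coe_lt_coe, Real.coe_toNNReal _ (le_of_lt hpos)]
      simpa [coe_nndist] using this
    calc ((((Finset.range n).sup fun k => nndist (T^[k] x) (T^[k] y)) : ℝ≥0) : ℝ)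
        < (Real.toNNReal (2 * L * ε) : ℝ) := NNReal.coe_lt_coe.2 hsup
      _ = 2 * L * ε := Real.coe_toNNReal _ (le_of_lt hpos)

end Aux

/-- For a dynamical system `(𝒳, T)` on a compact metric space, every `n ≥ 1`, `ε > 0`,
`L > 1`: `(1/n) log #(𝒳, d_n, 2Lε) ≤ log 2 + (1/L) log #(𝒳, d, ε) + (1/n) log #(𝒳, d̄_n, ε)`. -/
theorem coverNum_bowenMax_le {𝒳 : Type*} [MetricSpace 𝒳] [CompactSpace 𝒳]
    (T : 𝒳 → 𝒳) (hT : Continuous T) (n : ℕ) (hn : 0 < n) (ε L : ℝ) (hε : 0 < ε) (hL : 1 < L) :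
    (1 / n) * Real.log (coverNum 𝒳 (bowenMax T n) (2 * L * ε))
      ≤ Real.log 2 + (1 / L) * Real.log (coverNum 𝒳 dist ε)
        + (1 / n) * Real.log (coverNum 𝒳 (bowenAvg T n) ε) := by
  rcases isEmpty_or_nonempty 𝒳 with hemp | hne
  · have hzero : ∀ ρ : 𝒳 → 𝒳 → ℝ, ∀ δ : ℝ, coverNum 𝒳 ρ δ = 0 := by
      intro ρ δ
      have h0 : (0 : ℕ) ∈ {N : ℕ | ∃ U : Fin N → Set 𝒳, (∀ i, IsOpen (U i)) ∧
          (∀ x, ∃ i, x ∈ U i) ∧ ∀ i, ∀ x ∈ U i, ∀ y ∈ U i, ρ x y < δ} :=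
        ⟨Fin.elim0, fun i => i.elim0, fun x => (hemp.false x).elim, fun i => i.elim0⟩
      exact Nat.sInf_eq_zero.2 (Or.inl h0)
    rw [hzero, hzero, hzero]
    simp only [Nat.cast_zero, Real.log_zero, mul_zero, add_zero, zero_add]
    linarith [Real.log_nonneg (by norm_num : (1 : ℝ) ≤ 2)]
  · set K := coverNum 𝒳 dist ε with hKdef
    set M := coverNum 𝒳 (bowenAvg T n) ε with hMdef
    set m := Nat.floor ((n : ℝ) / L) with hmdef
    set N₀ := coverNum 𝒳 (bowenMax T n) (2 * L * ε) with hNdef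
    have hK : 0 < K := coverNum_pos (𝒳 := 𝒳) (ρ := dist) (exists_cover_dist hε)
    have hM : 0 < M := coverNum_pos (exists_cover_bowenAvg T hT n hn hε)
    have hKr : (0 : ℝ) < K := by exact_mod_cast hK
    have hMr : (0 : ℝ) < M := by exact_mod_cast hM
    have hkey : N₀ ≤ M * 2 ^ n * K ^ m := key_count T hT n hn ε L hε hL
    have hBpos : 0 < M * 2 ^ n * K ^ m := by positivity
    have hB1 : (1 : ℝ) ≤ ((M * 2 ^ n * K ^ m : ℕ) : ℝ) := by exact_mod_cast hBpos
    have hlog1 : Real.log N₀ ≤ Real.log ((M * 2 ^ n * K ^ m : ℕ) : ℝ) := by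
      rcases Nat.eq_zero_or_pos N₀ with h0 | h0
      · rw [h0]
        simp only [Nat.cast_zero, Real.log_zero]
        exact Real.log_nonneg hB1
      · exact Real.log_le_log (by exact_mod_cast h0) (by exact_mod_cast hkey)
    have hexp : Real.log ((M * 2 ^ n * K ^ m : ℕ) : ℝ)
        = Real.log M + n * Real.log 2 + m * Real.log K := by
      push_cast
      rw [Real.log_mul (by positivity) (by positivity),
        Real.log_mul (by positivity) (by positivity), Real.log_pow, Real.log_pow]
    have hn' : (0 : ℝ) < n := by exact_mod_cast hn
    have hLpos : (0 : ℝ) < L := by linarith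
    have hmL : (m : ℝ) * L ≤ n := by
      have hfl : (m : ℝ) ≤ (n : ℝ) / L := Nat.floor_le (le_of_lt (div_pos hn' hLpos))
      calc (m : ℝ) * L ≤ ((n : ℝ) / L) * L := by nlinarith
        _ = n := div_mul_cancel₀ _ (ne_of_gt hLpos)
    have hmn : (m : ℝ) / n ≤ 1 / L := by
      rw [div_le_div_iff₀ hn' hLpos]
      linarith
    have hlogK : 0 ≤ Real.log K := Real.log_nonneg (by exact_mod_cast hK)
    have step : (1 / (n : ℝ)) * Real.log N₀
        ≤ (1 / (n : ℝ)) * (Real.log M + n * Real.log 2 + m * Real.log K) := by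
      apply mul_le_mul_of_nonneg_left _ (by positivity)
      rw [← hexp]
      exact hlog1
    have expand : (1 / (n : ℝ)) * (Real.log M + n * Real.log 2 + m * Real.log K)
        = (1 / n) * Real.log M + Real.log 2 + ((m : ℝ) / n) * Real.log K := by
      field_simp
    have last : ((m : ℝ) / n) * Real.log K ≤ (1 / L) * Real.log K :=
      mul_le_mul_of_nonneg_right hmn hlogK
    rw [expand] at step
    linarith
end

section
/- Suppose a compact metric space (𝒳, d) with continuous T : 𝒳 → 𝒳 satisfies tame growth of covering numbers (for every δ > 0, ε^δ log #(𝒳,d,ε) → 0 as ε → 0). Then limsup_{ε→0} S(𝒳,T,d,ε)/|log ε| = limsup_{ε→0} S̃(𝒳,T,d,ε)/|log ε|, and the corresponding liminf equality also holds; i.e., the upper and lower metric mean dimensions can be computed using time-averaged Bowen metrics d̄_n in place of sup-metrics d_n. -/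
open Real Filter Set Topology
open scoped NNReal

/-- `S(𝒳,T,d,ε) = lim_n (1/n) log #(𝒳, d_n, ε)`; the limit exists by subadditivity, so it
equals the `limsup`. -/
noncomputable def SMax {𝒳 : Type*} [MetricSpace 𝒳] (T : 𝒳 → 𝒳) (ε : ℝ) : ℝ :=
  Filter.atTop.limsup fun n : ℕ => Real.log (coverNum 𝒳 (bowenMax T n) ε) / n

/-- `S̃(𝒳,T,d,ε) = lim_n (1/n) log #(𝒳, d̄_n, ε)`. -/
noncomputable def SAvg {𝒳 : Type*} [MetricSpace 𝒳] (T : 𝒳 → 𝒳) (ε : ℝ) : ℝ :=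
  Filter.atTop.limsup fun n : ℕ => Real.log (coverNum 𝒳 (bowenAvg T n) ε) / n

section Cover
variable {𝒳 : Type*} [TopologicalSpace 𝒳]

def coverSet (𝒳 : Type*) [TopologicalSpace 𝒳] (ρ : 𝒳 → 𝒳 → ℝ) (ε : ℝ) : Set ℕ :=
  {N : ℕ | ∃ U : Fin N → Set 𝒳, (∀ i, IsOpen (U i)) ∧ (∀ x, ∃ i, x ∈ U i) ∧
    ∀ i, ∀ x ∈ U i, ∀ y ∈ U i, ρ x y < ε}

lemma coverNum_eq (ρ : 𝒳 → 𝒳 → ℝ) (ε : ℝ) : coverNum 𝒳 ρ ε = sInf (coverSet 𝒳 ρ ε) := rfl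

lemma coverSet_upward {ρ : 𝒳 → 𝒳 → ℝ} {ε : ℝ} {N M : ℕ}
    (h : N ∈ coverSet 𝒳 ρ ε) (hNM : N ≤ M) : M ∈ coverSet 𝒳 ρ ε := by
  obtain ⟨U, hop, hcov, hdiam⟩ := h
  refine ⟨fun i => if h : (i : ℕ) < N then U ⟨i, h⟩ else ∅, fun i => ?_, fun x => ?_, ?_⟩
  · by_cases h : (i : ℕ) < N
    · simpa [h] using hop ⟨i, h⟩
    · simp [h]
  · obtain ⟨i, hi⟩ := hcov x
    exact ⟨⟨i, lt_of_lt_of_le i.2 hNM⟩, by simpa [i.2] using hi⟩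
  · intro i x hx y hy
    by_cases h : (i : ℕ) < N
    · simp only [dif_pos h] at hx hy
      exact hdiam _ _ hx _ hy
    · simp [dif_neg h] at hx

lemma coverNum_le_of_mem {ρ : 𝒳 → 𝒳 → ℝ} {ε : ℝ} {N : ℕ} (h : N ∈ coverSet 𝒳 ρ ε) :
    coverNum 𝒳 ρ ε ≤ N := Nat.sInf_le h

lemma coverNum_mem {ρ : 𝒳 → 𝒳 → ℝ} {ε : ℝ} (h : (coverSet 𝒳 ρ ε).Nonempty) :
    coverNum 𝒳 ρ ε ∈ coverSet 𝒳 ρ ε := Nat.sInf_mem h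

lemma one_le_of_mem_coverSet [Nonempty 𝒳] {ρ : 𝒳 → 𝒳 → ℝ} {ε : ℝ} {N : ℕ}
    (h : N ∈ coverSet 𝒳 ρ ε) : 1 ≤ N := by
  obtain ⟨U, _, hcov, _⟩ := h
  obtain ⟨i, _⟩ := hcov (Classical.arbitrary 𝒳)
  exact Nat.one_le_iff_ne_zero.2 (by rintro rfl; exact i.elim0)

lemma one_le_coverNum [Nonempty 𝒳] {ρ : 𝒳 → 𝒳 → ℝ} {ε : ℝ}
    (h : (coverSet 𝒳 ρ ε).Nonempty) : 1 ≤ coverNum 𝒳 ρ ε :=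
  one_le_of_mem_coverSet (coverNum_mem h)

lemma coverSet_anti {ρ ρ' : 𝒳 → 𝒳 → ℝ} {ε : ℝ} (hle : ∀ x y, ρ' x y ≤ ρ x y) :
    coverSet 𝒳 ρ ε ⊆ coverSet 𝒳 ρ' ε := by
  rintro N ⟨U, hop, hcov, hdiam⟩
  exact ⟨U, hop, hcov, fun i x hx y hy => lt_of_le_of_lt (hle x y) (hdiam i x hx y hy)⟩

lemma coverNum_anti {ρ ρ' : 𝒳 → 𝒳 → ℝ} {ε : ℝ} (hle : ∀ x y, ρ' x y ≤ ρ x y)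
    (h : (coverSet 𝒳 ρ ε).Nonempty) : coverNum 𝒳 ρ' ε ≤ coverNum 𝒳 ρ ε :=
  coverNum_le_of_mem (coverSet_anti hle (coverNum_mem h))

/-- abstract existence of finite covers on a compact space -/
lemma coverSet_nonempty [CompactSpace 𝒳] {ρ : 𝒳 → 𝒳 → ℝ}
    (hsym : ∀ x y, ρ x y = ρ y x) (htri : ∀ x y z, ρ x z ≤ ρ x y + ρ y z)
    (hself : ∀ x, ρ x x = 0) (hopen : ∀ x r, IsOpen {y | ρ x y < r})
    {ε : ℝ} (hε : 0 < ε) : (coverSet 𝒳 ρ ε).Nonempty := by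
  obtain ⟨t, ht⟩ := IsCompact.elim_finite_subcover (isCompact_univ (X := 𝒳))
    (fun x => {y | ρ x y < ε / 3}) (fun x => hopen x _)
    (fun x _ => mem_iUnion.2 ⟨x, by simp [hself x, hε]⟩)
  refine ⟨t.card, fun i => {y | ρ ((t.equivFin.symm i) : 𝒳) y < ε / 3},
    fun i => hopen _ _, fun x => ?_, ?_⟩
  · obtain ⟨a, ha, hx⟩ := by simpa using ht (mem_univ x)
    exact ⟨t.equivFin ⟨a, ha⟩, by simpa using hx⟩
  · intro i x hx y hy
    calc ρ x y ≤ ρ x _ + ρ _ y := htri _ _ _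
    _ = ρ _ x + ρ _ y := by rw [hsym]
    _ < ε / 3 + ε / 3 := add_lt_add hx hy
    _ < ε := by linarith

end Cover

section Bowen
variable {𝒳 : Type*} [PseudoMetricSpace 𝒳] (T : 𝒳 → 𝒳) (n : ℕ)

lemma bowenMax_nonneg (x y : 𝒳) : 0 ≤ bowenMax T n x y := NNReal.coe_nonneg _

lemma bowenMax_self (x : 𝒳) : bowenMax T n x x = 0 := by
  simp [bowenMax]

lemma bowenMax_comm (x y : 𝒳) : bowenMax T n x y = bowenMax T n y x := by
  unfold bowenMax; congr 1; exact Finset.sup_congr rfl fun k _ => nndist_comm _ _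

lemma bowenMax_triangle (x y z : 𝒳) :
    bowenMax T n x z ≤ bowenMax T n x y + bowenMax T n y z := by
  unfold bowenMax
  rw [← NNReal.coe_add, NNReal.coe_le_coe]
  refine Finset.sup_le fun k hk => ?_
  exact le_trans (nndist_triangle _ (T^[k] y) _)
    (add_le_add (Finset.le_sup (f := fun k => nndist (T^[k] x) (T^[k] y)) hk)
      (Finset.le_sup (f := fun k => nndist (T^[k] y) (T^[k] z)) hk))

lemma dist_le_bowenMax (x y : 𝒳) {k : ℕ} (hk : k < n) :
    dist (T^[k] x) (T^[k] y) ≤ bowenMax T n x y := by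
  rw [dist_nndist]
  exact_mod_cast Finset.le_sup (f := fun k => nndist (T^[k] x) (T^[k] y))
    (Finset.mem_range.2 hk)

lemma bowenMax_lt_iff {ε : ℝ} (hε : 0 < ε) (x y : 𝒳) :
    bowenMax T n x y < ε ↔ ∀ k < n, dist (T^[k] x) (T^[k] y) < ε := by
  constructor
  · intro h k hk
    exact lt_of_le_of_lt (dist_le_bowenMax T n x y hk) h
  · intro h
    unfold bowenMax
    rw [show ε = ((ε.toNNReal : ℝ≥0) : ℝ) from (Real.coe_toNNReal _ hε.le).symm,
      NNReal.coe_lt_coe, Finset.sup_lt_iff (show ⊥ < ε.toNNReal by simpa using hε)]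
    intro k hk
    have h2 := h k (Finset.mem_range.1 hk)
    rw [dist_nndist, show ε = ((ε.toNNReal : ℝ≥0) : ℝ) from (Real.coe_toNNReal _ hε.le).symm,
      NNReal.coe_lt_coe] at h2
    exact h2

lemma bowenAvg_nonneg (x y : 𝒳) : 0 ≤ bowenAvg T n x y :=
  div_nonneg (Finset.sum_nonneg fun _ _ => dist_nonneg) (Nat.cast_nonneg n)

lemma bowenAvg_le_bowenMax (x y : 𝒳) : bowenAvg T n x y ≤ bowenMax T n x y := by
  rcases Nat.eq_zero_or_pos n with rfl | hn
  · simp [bowenAvg, bowenMax_nonneg]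
  · rw [bowenAvg, div_le_iff₀ (by exact_mod_cast hn)]
    calc ∑ k ∈ Finset.range n, dist (T^[k] x) (T^[k] y)
        ≤ ∑ _k ∈ Finset.range n, bowenMax T n x y :=
          Finset.sum_le_sum fun k hk => dist_le_bowenMax T n x y (Finset.mem_range.1 hk)
      _ = bowenMax T n x y * n := by simp [mul_comm]

variable {T} in
lemma isOpen_bowenMax_ball (hT : Continuous T) (x : 𝒳) (r : ℝ) :
    IsOpen {y | bowenMax T n x y < r} := by
  rcases le_or_gt r 0 with hr | hr
  · convert isOpen_empty
    ext y
    simp only [mem_setOf_eq, mem_empty_iff_false, iff_false, not_lt]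
    exact le_trans hr (bowenMax_nonneg T n x y)
  · have : {y | bowenMax T n x y < r} =
        ⋂ k ∈ Finset.range n, (T^[k]) ⁻¹' Metric.ball (T^[k] x) r := by
      ext y
      simp only [mem_setOf_eq, bowenMax_lt_iff T n hr, Finset.mem_range, mem_iInter,
        mem_preimage, Metric.mem_ball]
      exact ⟨fun h k hk => by rw [dist_comm]; exact h k hk,
             fun h k hk => by rw [dist_comm]; exact h k hk⟩
    rw [this]
    exact isOpen_biInter_finset fun k _ => (Metric.isOpen_ball).preimage (hT.iterate k)

variable {T} in
lemma isOpen_bowenAvg_ball (hT : Continuous T) (x : 𝒳) (r : ℝ) :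
    IsOpen {y | bowenAvg T n x y < r} := by
  have hc : Continuous fun y => bowenAvg T n x y := by
    apply Continuous.div_const
    exact continuous_finset_sum _ fun k _ => continuous_const.dist (hT.iterate k)
  exact isOpen_lt hc continuous_const

lemma bowenAvg_comm (x y : 𝒳) : bowenAvg T n x y = bowenAvg T n y x := by
  unfold bowenAvg; congr 1; exact Finset.sum_congr rfl fun k _ => dist_comm _ _

lemma bowenAvg_self (x : 𝒳) : bowenAvg T n x x = 0 := by simp [bowenAvg]

lemma bowenAvg_triangle (x y z : 𝒳) :
    bowenAvg T n x z ≤ bowenAvg T n x y + bowenAvg T n y z := by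
  unfold bowenAvg
  rw [← add_div, ← Finset.sum_add_distrib]
  rcases Nat.eq_zero_or_pos n with rfl | hn
  · simp
  · exact (div_le_div_iff_of_pos_right (show (0:ℝ) < n by exact_mod_cast hn)).2
      (Finset.sum_le_sum fun k _ => dist_triangle _ (T^[k] y) _)

end Bowen

section Part3
variable {𝒳 : Type*} [MetricSpace 𝒳] [CompactSpace 𝒳] {T : 𝒳 → 𝒳} (hT : Continuous T)

lemma coverSet_dist_nonempty {ε : ℝ} (hε : 0 < ε) : (coverSet 𝒳 dist ε).Nonempty :=
  coverSet_nonempty dist_comm dist_triangle dist_self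
    (fun x r => isOpen_lt (continuous_const.dist continuous_id) continuous_const) hε

include hT in
lemma coverSet_max_nonempty (n : ℕ) {ε : ℝ} (hε : 0 < ε) :
    (coverSet 𝒳 (bowenMax T n) ε).Nonempty :=
  coverSet_nonempty (bowenMax_comm T n) (bowenMax_triangle T n) (bowenMax_self T n)
    (isOpen_bowenMax_ball n hT) hε

include hT in
lemma coverSet_avg_nonempty (n : ℕ) {ε : ℝ} (hε : 0 < ε) :
    (coverSet 𝒳 (bowenAvg T n) ε).Nonempty :=
  coverSet_nonempty (bowenAvg_comm T n) (bowenAvg_triangle T n) (bowenAvg_self T n)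
    (isOpen_bowenAvg_ball n hT) hε

include hT in
lemma coverNum_avg_le_max (n : ℕ) {ε : ℝ} (hε : 0 < ε) :
    coverNum 𝒳 (bowenAvg T n) ε ≤ coverNum 𝒳 (bowenMax T n) ε :=
  coverNum_anti (bowenAvg_le_bowenMax T n) (coverSet_max_nonempty hT n hε)

include hT in
/-- product refinement: `K^n` covers for the sup metric. -/
lemma pow_mem_coverSet_max (n : ℕ) {ε : ℝ} (hε : 0 < ε) :
    (coverNum 𝒳 dist ε) ^ n ∈ coverSet 𝒳 (bowenMax T n) ε := by
  set K := coverNum 𝒳 dist ε with hKdef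
  obtain ⟨W, hWop, hWcov, hWdiam⟩ := coverNum_mem (coverSet_dist_nonempty (𝒳 := 𝒳) hε)
  refine ⟨fun i => ⋂ k : Fin n, (T^[(k : ℕ)]) ⁻¹' W (finFunctionFinEquiv.symm i k),
    fun i => isOpen_iInter_of_finite fun k => (hWop _).preimage (hT.iterate _),
    fun x => ?_, ?_⟩
  · refine ⟨finFunctionFinEquiv (fun k => (hWcov (T^[(k : ℕ)] x)).choose), ?_⟩
    simp only [mem_iInter, Equiv.symm_apply_apply, mem_preimage]
    exact fun k => (hWcov (T^[(k : ℕ)] x)).choose_spec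
  · intro i x hx y hy
    rw [bowenMax_lt_iff T n hε]
    intro k hk
    simp only [mem_iInter, mem_preimage] at hx hy
    exact hWdiam _ _ (hx ⟨k, hk⟩) _ (hy ⟨k, hk⟩)

include hT in
lemma coverNum_max_le_pow (n : ℕ) {ε : ℝ} (hε : 0 < ε) :
    coverNum 𝒳 (bowenMax T n) ε ≤ (coverNum 𝒳 dist ε) ^ n :=
  coverNum_le_of_mem (pow_mem_coverSet_max hT n hε)

end Part3

section Core
variable {𝒳 : Type*} [MetricSpace 𝒳] [CompactSpace 𝒳] [Nonempty 𝒳] {T : 𝒳 → 𝒳}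

lemma core_count (hT : Continuous T) (n : ℕ) {ε τ : ℝ} (hε : 0 < ε) (hτ : 0 < τ) :
    coverNum 𝒳 (bowenMax T n) (3 * ε) ≤
      coverNum 𝒳 (bowenAvg T n) (τ * ε) * (2 ^ n * (coverNum 𝒳 dist ε) ^ (⌈τ * (n : ℝ)⌉₊)) := by
  classical
  set K := coverNum 𝒳 dist ε with hKdef
  set C := coverNum 𝒳 (bowenAvg T n) (τ * ε) with hCdef
  set m := ⌈τ * (n : ℝ)⌉₊ with hmdef
  have hKmem : K ∈ coverSet 𝒳 dist ε := coverNum_mem (coverSet_dist_nonempty (𝒳 := 𝒳) hε)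
  have hCmem : C ∈ coverSet 𝒳 (bowenAvg T n) (τ * ε) :=
    coverNum_mem (coverSet_avg_nonempty hT n (mul_pos hτ hε))
  obtain ⟨W, hWop, hWcov, hWdiam⟩ := hKmem
  obtain ⟨E, hEop, hEcov, hEdiam⟩ := hCmem
  set x₀ : Fin C → 𝒳 := fun j =>
    if h : (E j).Nonempty then h.choose else Classical.arbitrary 𝒳 with hx₀
  set A : (Fin C × (Σ S : {S : Finset (Fin n) // S.card ≤ m},
      ({k : Fin n // k ∈ S.1} → Fin K))) → Set 𝒳 := fun p =>
    {y | y ∈ E p.1 ∧ (∀ k : Fin n, k ∉ p.2.1.1 →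
        dist (T^[(k : ℕ)] (x₀ p.1)) (T^[(k : ℕ)] y) < ε) ∧
      ∀ k : {k : Fin n // k ∈ p.2.1.1}, T^[((k : Fin n) : ℕ)] y ∈ W (p.2.2 k)} with hAdef
  set V : (Fin C × (Σ S : {S : Finset (Fin n) // S.card ≤ m},
      ({k : Fin n // k ∈ S.1} → Fin K))) → Set 𝒳 :=
    fun p => ⋃ y ∈ A p, {z | bowenMax T n y z < ε / 2} with hVdef
  have hVopen : ∀ p, IsOpen (V p) :=
    fun p => isOpen_biUnion fun y _ => isOpen_bowenMax_ball n hT y (ε / 2)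
  have hAV : ∀ p, A p ⊆ V p := by
    intro p y hy
    exact mem_biUnion hy (by simp [bowenMax_self, half_pos hε])
  have hVcov : ∀ x, ∃ p, x ∈ V p := by
    intro x
    obtain ⟨j, hj⟩ := hEcov x
    have hEj : (E j).Nonempty := ⟨x, hj⟩
    have hx₀j : x₀ j ∈ E j := by
      rw [hx₀]; simp only [dif_pos hEj]; exact hEj.choose_spec
    set S : Finset (Fin n) :=
      Finset.univ.filter (fun k : Fin n => ε ≤ dist (T^[(k : ℕ)] (x₀ j)) (T^[(k : ℕ)] x))
      with hS
    have havg : bowenAvg T n (x₀ j) x < τ * ε := hEdiam j _ hx₀j _ hj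
    have hcard : S.card ≤ m := by
      rcases Nat.eq_zero_or_pos n with hn | hn
      · subst hn
        exact le_trans (by simpa using Finset.card_le_univ S) (Nat.zero_le m)
      · have h1 : (S.card : ℝ) * ε ≤ ∑ k ∈ S, dist (T^[(k : ℕ)] (x₀ j)) (T^[(k : ℕ)] x) := by
          simpa [nsmul_eq_mul] using Finset.card_nsmul_le_sum S
            (fun k => dist (T^[(k : ℕ)] (x₀ j)) (T^[(k : ℕ)] x)) ε
            (fun k hk => (Finset.mem_filter.1 hk).2)
        have h2 : ∑ k ∈ S, dist (T^[(k : ℕ)] (x₀ j)) (T^[(k : ℕ)] x)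
            ≤ ∑ k : Fin n, dist (T^[(k : ℕ)] (x₀ j)) (T^[(k : ℕ)] x) :=
          Finset.sum_le_sum_of_subset_of_nonneg (Finset.subset_univ S)
            (fun _ _ _ => dist_nonneg)
        have h3 : ∑ k : Fin n, dist (T^[(k : ℕ)] (x₀ j)) (T^[(k : ℕ)] x)
            = bowenAvg T n (x₀ j) x * n := by
          rw [Fin.sum_univ_eq_sum_range (fun k => dist (T^[k] (x₀ j)) (T^[k] x)) n, bowenAvg]
          field_simp
        have h5 : (S.card : ℝ) * ε < τ * (n : ℝ) * ε := by
          have hnpos : (0 : ℝ) < n := by exact_mod_cast hn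
          calc (S.card : ℝ) * ε ≤ bowenAvg T n (x₀ j) x * n := le_trans h1 (h2.trans_eq h3)
            _ < τ * ε * n := by exact mul_lt_mul_of_pos_right havg hnpos
            _ = τ * (n : ℝ) * ε := by ring
        have h6 : (S.card : ℝ) < τ * (n : ℝ) := lt_of_mul_lt_mul_right h5 hε.le
        have h7 : (S.card : ℝ) ≤ (m : ℝ) := le_trans h6.le (Nat.le_ceil _)
        exact_mod_cast h7
    obtain ⟨w, hwspec⟩ := Classical.axiomOfChoice
      (fun k : {k : Fin n // k ∈ S} => hWcov (T^[((k : Fin n) : ℕ)] x))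
    refine ⟨⟨j, ⟨⟨S, hcard⟩, w⟩⟩, hAV _ ⟨hj, fun k hk => ?_, fun k => hwspec k⟩⟩
    have : ¬ ε ≤ dist (T^[(k : ℕ)] (x₀ j)) (T^[(k : ℕ)] x) := by
      intro hcon
      exact hk (Finset.mem_filter.2 ⟨Finset.mem_univ _, hcon⟩)
    exact not_le.1 this
  have hVdiam : ∀ p, ∀ z ∈ V p, ∀ z' ∈ V p, bowenMax T n z z' < 3 * ε := by
    intro p z hz z' hz'
    simp only [hVdef, mem_iUnion, exists_prop] at hz hz'
    obtain ⟨y, hyA, hyz⟩ := hz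
    obtain ⟨y', hy'A, hy'z'⟩ := hz'
    have hyy' : bowenMax T n y y' < 2 * ε := by
      rw [bowenMax_lt_iff T n (by linarith)]
      intro k hk
      by_cases hkS : (⟨k, hk⟩ : Fin n) ∈ p.2.1.1
      · have h1 := hyA.2.2 ⟨⟨k, hk⟩, hkS⟩
        have h2 := hy'A.2.2 ⟨⟨k, hk⟩, hkS⟩
        have := hWdiam (p.2.2 ⟨⟨k, hk⟩, hkS⟩) _ h1 _ h2
        simpa using this.trans (by linarith)
      · have h1 := hyA.2.1 ⟨k, hk⟩ hkS
        have h2 := hy'A.2.1 ⟨k, hk⟩ hkS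
        calc dist (T^[k] y) (T^[k] y')
            ≤ dist (T^[k] y) (T^[(k : ℕ)] (x₀ p.1)) + dist (T^[(k : ℕ)] (x₀ p.1)) (T^[k] y') :=
              dist_triangle _ _ _
          _ < ε + ε := add_lt_add (by rw [dist_comm]; exact h1) h2
          _ = 2 * ε := by ring
    calc bowenMax T n z z'
        ≤ bowenMax T n z y + bowenMax T n y z' := bowenMax_triangle T n _ _ _
      _ ≤ bowenMax T n z y + (bowenMax T n y y' + bowenMax T n y' z') :=
          add_le_add le_rfl (bowenMax_triangle T n _ _ _)
      _ < ε / 2 + (2 * ε + ε / 2) := by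
          refine add_lt_add ?_ (add_lt_add hyy' hy'z')
          rw [bowenMax_comm]; exact hyz
      _ = 3 * ε := by ring
  have hK1 : 1 ≤ K := one_le_of_mem_coverSet (ρ := dist) (ε := ε) ⟨W, hWop, hWcov, hWdiam⟩
  have hmemI : Fintype.card (Fin C × (Σ S : {S : Finset (Fin n) // S.card ≤ m},
      ({k : Fin n // k ∈ S.1} → Fin K))) ∈ coverSet 𝒳 (bowenMax T n) (3 * ε) := by
    refine ⟨fun i => V ((Fintype.equivFin _).symm i), fun i => hVopen _, fun x => ?_,
      fun i x hx y hy => hVdiam _ _ hx _ hy⟩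
    obtain ⟨p, hp⟩ := hVcov x
    exact ⟨Fintype.equivFin _ p, by simpa using hp⟩
  have hcount : Fintype.card (Fin C × (Σ S : {S : Finset (Fin n) // S.card ≤ m},
      ({k : Fin n // k ∈ S.1} → Fin K))) ≤ C * (2 ^ n * K ^ m) := by
    rw [Fintype.card_prod, Fintype.card_fin]
    refine Nat.mul_le_mul_left _ ?_
    rw [Fintype.card_sigma]
    calc ∑ S : {S : Finset (Fin n) // S.card ≤ m},
          Fintype.card ({k : Fin n // k ∈ S.1} → Fin K)
        ≤ ∑ _S : {S : Finset (Fin n) // S.card ≤ m}, K ^ m := by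
          refine Finset.sum_le_sum fun S _ => ?_
          rw [Fintype.card_fun, Fintype.card_fin, Fintype.card_coe]
          exact Nat.pow_le_pow_right hK1 S.2
      _ = Fintype.card {S : Finset (Fin n) // S.card ≤ m} * K ^ m := by
          rw [Finset.sum_const, smul_eq_mul, Finset.card_univ]
      _ ≤ 2 ^ n * K ^ m := by
          refine Nat.mul_le_mul_right _ ?_
          calc Fintype.card {S : Finset (Fin n) // S.card ≤ m}
              ≤ Fintype.card (Finset (Fin n)) := Fintype.card_subtype_le _
            _ = 2 ^ n := by rw [Fintype.card_finset, Fintype.card_fin]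
  exact coverNum_le_of_mem (coverSet_upward hmemI hcount)

end Core

section LimsupHelpers
variable {α : Type*} {l : Filter α} [l.NeBot] {u v : α → ℝ}

lemma my_limsup_nonneg (h : ∀ᶠ x in l, 0 ≤ u x) : 0 ≤ Filter.limsup u l := by
  rw [Filter.limsup_eq]
  refine Real.sInf_nonneg fun a ha => ?_
  obtain ⟨x, hx1, hx2⟩ := (ha.and h).exists
  linarith

lemma my_limsup_mono (huv : ∀ᶠ x in l, u x ≤ v x) (h0 : ∀ᶠ x in l, 0 ≤ u x)
    {B : ℝ} (hB : ∀ᶠ x in l, v x ≤ B) : Filter.limsup u l ≤ Filter.limsup v l := by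
  rw [Filter.limsup_eq, Filter.limsup_eq]
  refine le_csInf ⟨B, hB⟩ fun b hb => ?_
  refine csInf_le ⟨0, fun a ha => ?_⟩ ?_
  · obtain ⟨x, hx1, hx2⟩ := (ha.and h0).exists
    linarith
  · exact (huv.and hb).mono fun x hx => hx.1.trans hx.2

lemma my_limsup_le_add {c : ℝ} (h : ∀ η : ℝ, 0 < η → ∀ᶠ x in l, u x ≤ v x + c + η)
    (h0 : ∀ᶠ x in l, 0 ≤ u x) (h0v : ∀ᶠ x in l, 0 ≤ v x)
    {B : ℝ} (hB : ∀ᶠ x in l, v x ≤ B) :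
    Filter.limsup u l ≤ Filter.limsup v l + c := by
  refine le_of_forall_pos_le_add fun η hη => ?_
  have hVne : {a | ∀ᶠ x in l, v x ≤ a}.Nonempty := ⟨B, hB⟩
  have hlt : Filter.limsup v l < Filter.limsup v l + η / 2 := by linarith
  rw [Filter.limsup_eq] at hlt
  obtain ⟨r, hr, hrlt⟩ := exists_lt_of_csInf_lt hVne hlt
  have hmem : r + c + η / 2 ∈ {a | ∀ᶠ x in l, u x ≤ a} :=
    ((h (η / 2) (by linarith)).and hr).mono fun x hx => by
      have h1 := hx.1; have h2 := hx.2; show u x ≤ r + c + η / 2; linarith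
  have hbdd : BddBelow {a | ∀ᶠ x in l, u x ≤ a} := by
    refine ⟨0, fun a ha => ?_⟩
    obtain ⟨x, hx1, hx2⟩ := (ha.and h0).exists
    linarith
  rw [Filter.limsup_eq, Filter.limsup_eq]
  calc sInf {a | ∀ᶠ x in l, u x ≤ a} ≤ r + c + η / 2 := csInf_le hbdd hmem
    _ ≤ sInf {a | ∀ᶠ (n : α) in l, v n ≤ a} + c + η := by linarith

end LimsupHelpers

section Part5
variable {𝒳 : Type*} [MetricSpace 𝒳] [CompactSpace 𝒳] [Nonempty 𝒳] {T : 𝒳 → 𝒳}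

lemma log_nat_mono {a b : ℕ} (h : a ≤ b) : Real.log a ≤ Real.log b := by
  rcases Nat.eq_zero_or_pos a with rfl | ha
  · simpa using Real.log_natCast_nonneg b
  · exact Real.log_le_log (by exact_mod_cast ha) (by exact_mod_cast h)

lemma seq_nonneg (ρ : 𝒳 → 𝒳 → ℝ) (s : ℝ) (n : ℕ) :
    0 ≤ Real.log (coverNum 𝒳 ρ s) / n :=
  div_nonneg (Real.log_natCast_nonneg _) (Nat.cast_nonneg n)

lemma SMax_nonneg (T : 𝒳 → 𝒳) (ε : ℝ) : 0 ≤ SMax T ε :=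
  my_limsup_nonneg (Eventually.of_forall fun n => seq_nonneg _ _ n)

lemma SAvg_nonneg (T : 𝒳 → 𝒳) (ε : ℝ) : 0 ≤ SAvg T ε :=
  my_limsup_nonneg (Eventually.of_forall fun n => seq_nonneg _ _ n)

lemma seq_max_le (hT : Continuous T) {s : ℝ} (hs : 0 < s) (n : ℕ) :
    Real.log (coverNum 𝒳 (bowenMax T n) s) / n ≤ Real.log (coverNum 𝒳 dist s) := by
  rcases Nat.eq_zero_or_pos n with rfl | hn
  · simpa using Real.log_natCast_nonneg (coverNum 𝒳 dist s)
  · rw [div_le_iff₀ (by exact_mod_cast hn)]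
    calc Real.log (coverNum 𝒳 (bowenMax T n) s)
        ≤ Real.log (((coverNum 𝒳 dist s ^ n : ℕ) : ℝ)) :=
          log_nat_mono (coverNum_max_le_pow hT n hs)
      _ = Real.log (coverNum 𝒳 dist s) * n := by
          push_cast
          rw [Real.log_pow]
          ring

lemma seq_avg_le_max (hT : Continuous T) {s : ℝ} (hs : 0 < s) (n : ℕ) :
    Real.log (coverNum 𝒳 (bowenAvg T n) s) / n ≤ Real.log (coverNum 𝒳 (bowenMax T n) s) / n := by
  rcases Nat.eq_zero_or_pos n with rfl | hn
  · simp
  · exact (div_le_div_iff_of_pos_right (by exact_mod_cast hn)).2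
      (log_nat_mono (coverNum_avg_le_max hT n hs))

lemma seq_avg_le (hT : Continuous T) {s : ℝ} (hs : 0 < s) (n : ℕ) :
    Real.log (coverNum 𝒳 (bowenAvg T n) s) / n ≤ Real.log (coverNum 𝒳 dist s) :=
  le_trans (seq_avg_le_max hT hs n) (seq_max_le hT hs n)

lemma SAvg_le_SMax (hT : Continuous T) {ε : ℝ} (hε : 0 < ε) : SAvg T ε ≤ SMax T ε :=
  my_limsup_mono (Eventually.of_forall fun n => seq_avg_le_max hT hε n)
    (Eventually.of_forall fun n => seq_nonneg _ _ n)
    (Eventually.of_forall fun n => seq_max_le hT hε n)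

end Part5

section PartD
variable {𝒳 : Type*} [MetricSpace 𝒳] [CompactSpace 𝒳] [Nonempty 𝒳] {T : 𝒳 → 𝒳}

lemma SMax_le_SAvg_add (hT : Continuous T) {ε τ : ℝ} (hε : 0 < ε) (hτ : 0 < τ) :
    SMax T (3 * ε) ≤ SAvg T (τ * ε)
      + (Real.log 2 + τ * Real.log (coverNum 𝒳 dist ε)) := by
  refine my_limsup_le_add ?_ (Eventually.of_forall fun n => seq_nonneg _ _ n)
    (Eventually.of_forall fun n => seq_nonneg _ _ n)
    (B := Real.log (coverNum 𝒳 dist (τ * ε)))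
    (Eventually.of_forall fun n => seq_avg_le hT (mul_pos hτ hε) n)
  intro η hη
  set L := Real.log (coverNum 𝒳 dist ε) with hLdef
  have hL0 : 0 ≤ L := Real.log_natCast_nonneg _
  have hev : ∀ᶠ n : ℕ in atTop, L / n < η :=
    (tendsto_const_div_atTop_nhds_zero_nat L).eventually_lt_const hη
  filter_upwards [hev, eventually_ge_atTop 1] with n hn hn1
  have hnpos : (0 : ℝ) < n := by exact_mod_cast hn1
  set C := coverNum 𝒳 (bowenAvg T n) (τ * ε) with hCdef
  set K := coverNum 𝒳 dist ε with hKdef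
  set m := ⌈τ * (n : ℝ)⌉₊ with hmdef
  have hC1 : 1 ≤ C := one_le_coverNum (coverSet_avg_nonempty hT n (mul_pos hτ hε))
  have hK1 : 1 ≤ K := one_le_coverNum (coverSet_dist_nonempty (𝒳 := 𝒳) hε)
  have hCpos : (0 : ℝ) < (C : ℝ) := by exact_mod_cast hC1
  have hKpos : (0 : ℝ) < (K : ℝ) := by exact_mod_cast hK1
  have hcore := core_count hT n hε hτ
  have hlog : Real.log (coverNum 𝒳 (bowenMax T n) (3 * ε)) ≤
      Real.log C + ((n : ℝ) * Real.log 2 + (m : ℝ) * L) := by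
    have h1 : Real.log (coverNum 𝒳 (bowenMax T n) (3 * ε)) ≤
        Real.log ((C * (2 ^ n * K ^ m) : ℕ) : ℝ) := log_nat_mono hcore
    refine h1.trans_eq ?_
    push_cast
    rw [Real.log_mul hCpos.ne' (by positivity), Real.log_mul (by positivity) (by positivity),
      Real.log_pow, Real.log_pow]
  rw [div_le_iff₀ hnpos]
  have hcancel : Real.log C / (n : ℝ) * n = Real.log C := div_mul_cancel₀ _ (ne_of_gt hnpos)
  have hm : (m : ℝ) ≤ τ * n + 1 := le_of_lt (by
    rw [hmdef]
    exact Nat.ceil_lt_add_one (by positivity))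
  have hLn : L < η * n := by rwa [div_lt_iff₀ hnpos] at hn
  have hmL : (m : ℝ) * L ≤ (τ * n + 1) * L := mul_le_mul_of_nonneg_right hm hL0
  nlinarith [hlog, hcancel, hmL, hLn]

end PartD

section MapFacts

lemma tendsto_div3 : Tendsto (fun x : ℝ => x / 3) (𝓝[>] (0 : ℝ)) (𝓝[>] (0 : ℝ)) := by
  rw [tendsto_nhdsWithin_iff]
  constructor
  · have h := (continuous_id.div_const (3 : ℝ)).tendsto 0
    simp only [id_eq, zero_div] at h
    exact h.mono_left nhdsWithin_le_nhds
  · filter_upwards [self_mem_nhdsWithin] with x hx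
    exact div_pos (show (0:ℝ) < x from hx) (by norm_num)

lemma tendsto_mul3 : Tendsto (fun x : ℝ => x * 3) (𝓝[>] (0 : ℝ)) (𝓝[>] (0 : ℝ)) := by
  rw [tendsto_nhdsWithin_iff]
  constructor
  · have h := (continuous_id.mul (continuous_const (y := (3:ℝ)))).tendsto (0 : ℝ)
    simp only [Pi.mul_apply, id_eq, zero_mul] at h
    exact h.mono_left nhdsWithin_le_nhds
  · filter_upwards [self_mem_nhdsWithin] with x hx
    exact mul_pos (show (0:ℝ) < x from hx) (by norm_num)

lemma tendsto_rpowc {c : ℝ} (hc : 0 < c) :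
    Tendsto (fun x : ℝ => x ^ c) (𝓝[>] (0 : ℝ)) (𝓝[>] (0 : ℝ)) := by
  rw [tendsto_nhdsWithin_iff]
  constructor
  · have h := (Real.continuousAt_rpow_const 0 c (Or.inr hc.le)).tendsto
    rw [Real.zero_rpow hc.ne'] at h
    exact h.mono_left nhdsWithin_le_nhds
  · filter_upwards [self_mem_nhdsWithin] with x hx
    exact Real.rpow_pos_of_pos hx c

lemma map_eq_of_inverse {f g : ℝ → ℝ}
    (hf : Tendsto f (𝓝[>] (0 : ℝ)) (𝓝[>] (0 : ℝ)))
    (hg : Tendsto g (𝓝[>] (0 : ℝ)) (𝓝[>] (0 : ℝ)))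
    (hfg : ∀ᶠ x in 𝓝[>] (0 : ℝ), f (g x) = x) :
    Filter.map f (𝓝[>] (0 : ℝ)) = 𝓝[>] (0 : ℝ) := by
  refine le_antisymm hf ?_
  have h2 : Filter.map (f ∘ g) (𝓝[>] (0 : ℝ)) = 𝓝[>] (0 : ℝ) := by
    rw [Filter.map_congr (show (f ∘ g) =ᶠ[𝓝[>] (0 : ℝ)] id from hfg), Filter.map_id]
  calc 𝓝[>] (0 : ℝ) = Filter.map (f ∘ g) (𝓝[>] (0 : ℝ)) := h2.symm
    _ = Filter.map f (Filter.map g (𝓝[>] (0 : ℝ))) := (Filter.map_map).symm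
    _ ≤ Filter.map f (𝓝[>] (0 : ℝ)) := Filter.map_mono hg

lemma map_div3 : Filter.map (fun x : ℝ => x / 3) (𝓝[>] (0 : ℝ)) = 𝓝[>] (0 : ℝ) :=
  map_eq_of_inverse tendsto_div3 tendsto_mul3
    (Eventually.of_forall fun x => by field_simp)

lemma map_rpowc {c : ℝ} (hc : 0 < c) :
    Filter.map (fun x : ℝ => x ^ c) (𝓝[>] (0 : ℝ)) = 𝓝[>] (0 : ℝ) := by
  refine map_eq_of_inverse (tendsto_rpowc hc) (tendsto_rpowc (inv_pos.2 hc)) ?_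
  filter_upwards [self_mem_nhdsWithin] with x hx
  rw [← Real.rpow_mul (le_of_lt hx), inv_mul_cancel₀ hc.ne', Real.rpow_one]

lemma map_phi {δ : ℝ} (hδ : 0 < δ) :
    Filter.map (fun ε : ℝ => (ε / 3) ^ (1 + δ)) (𝓝[>] (0 : ℝ)) = 𝓝[>] (0 : ℝ) := by
  have : (fun ε : ℝ => (ε / 3) ^ (1 + δ))
      = (fun x : ℝ => x ^ (1 + δ)) ∘ (fun x : ℝ => x / 3) := rfl
  rw [this, ← Filter.map_map, map_div3, map_rpowc (by linarith)]

end MapFacts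

section F2sec
variable {𝒳 : Type*} [MetricSpace 𝒳] [CompactSpace 𝒳] [Nonempty 𝒳] {T : 𝒳 → 𝒳}

lemma F2 (hT : Continuous T)
    (htame : ∀ δ : ℝ, 0 < δ →
      Tendsto (fun ε : ℝ => ε ^ δ * Real.log (coverNum 𝒳 dist ε)) (𝓝[>] (0 : ℝ)) (𝓝 0))
    {δ : ℝ} (hδ : 0 < δ) :
    ∀ᶠ ε in 𝓝[>] (0 : ℝ), SMax T ε / |Real.log ε| ≤
      (1 + δ) ^ 2 * (SAvg T ((ε / 3) ^ (1 + δ)) / |Real.log ((ε / 3) ^ (1 + δ))|) + δ := by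
  have h3 : (0 : ℝ) < Real.log 3 := Real.log_pos (by norm_num)
  have h21 : (0 : ℝ) < Real.log 2 + 1 := by positivity
  set c₀ : ℝ := min 1 (min (Real.exp (-(Real.log 3 / δ))) (Real.exp (-((Real.log 2 + 1) / δ))))
    with hc₀
  have hc₀pos : 0 < c₀ := by positivity
  have htm := ((htame δ hδ).comp tendsto_div3).eventually_lt_const one_pos
  filter_upwards [Ioo_mem_nhdsGT_of_mem ⟨le_refl (0 : ℝ), hc₀pos⟩, htm] with ε hεI htm'
  obtain ⟨hε0, hεc₀⟩ := hεI
  have hε1 : ε < 1 := lt_of_lt_of_le hεc₀ (min_le_left _ _)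
  have hεc3 : ε < Real.exp (-(Real.log 3 / δ)) :=
    lt_of_lt_of_le hεc₀ ((min_le_right _ _).trans (min_le_left _ _))
  have hεc4 : ε < Real.exp (-((Real.log 2 + 1) / δ)) :=
    lt_of_lt_of_le hεc₀ ((min_le_right _ _).trans (min_le_right _ _))
  -- basic structure
  set e : ℝ := ε / 3 with hedef
  have he0 : 0 < e := by positivity
  have he1 : e < 1 := by rw [hedef]; linarith
  have hτ0 : 0 < e ^ δ := Real.rpow_pos_of_pos he0 δ
  have hD := SMax_le_SAvg_add hT (ε := e) (τ := e ^ δ) he0 hτ0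
  have h3e : 3 * e = ε := by rw [hedef]; ring
  have hscale : e ^ δ * e = e ^ (1 + δ) := by
    rw [Real.rpow_add he0, Real.rpow_one]; ring
  have htame1 : e ^ δ * Real.log (coverNum 𝒳 dist e) ≤ 1 := by
    simpa [Function.comp, hedef] using htm'.le
  have key1 : SMax T ε ≤ SAvg T (e ^ (1 + δ)) + (Real.log 2 + 1) := by
    rw [← h3e, ← hscale]
    refine hD.trans ?_
    have := htame1
    linarith
  set φ : ℝ := e ^ (1 + δ) with hφdef
  have hφ0 : 0 < φ := Real.rpow_pos_of_pos he0 _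
  have hφ1 : φ < 1 := Real.rpow_lt_one he0.le he1 (by linarith)
  -- logs
  have hlogε_neg : Real.log ε < 0 := Real.log_neg hε0 hε1
  have habsε : |Real.log ε| = -Real.log ε := abs_of_neg hlogε_neg
  have hLpos : 0 < |Real.log ε| := by rw [habsε]; linarith
  have hloge : Real.log e = Real.log ε - Real.log 3 := by
    rw [hedef, Real.log_div hε0.ne' (by norm_num)]
  have hlogφ : Real.log φ = (1 + δ) * (Real.log ε - Real.log 3) := by
    rw [hφdef, Real.log_rpow he0, hloge]
  have hLφeq : |Real.log φ| = (1 + δ) * (|Real.log ε| + Real.log 3) := by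
    rw [hlogφ, abs_mul, abs_of_pos (show (0 : ℝ) < 1 + δ by linarith),
      abs_of_neg (show Real.log ε - Real.log 3 < 0 by linarith), habsε]
    ring
  have hLφpos : 0 < |Real.log φ| := by
    rw [hLφeq]; positivity
  -- the two smallness facts
  have he3 : Real.log 3 ≤ δ * |Real.log ε| := by
    have := Real.log_lt_log hε0 hεc3
    rw [Real.log_exp] at this
    rw [habsε]
    have h' : Real.log 3 / δ < -Real.log ε := by linarith
    have := (div_lt_iff₀ hδ).1 h'
    linarith
  have he4 : Real.log 2 + 1 ≤ δ * |Real.log ε| := by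
    have := Real.log_lt_log hε0 hεc4
    rw [Real.log_exp] at this
    rw [habsε]
    have h' : (Real.log 2 + 1) / δ < -Real.log ε := by linarith
    have := (div_lt_iff₀ hδ).1 h'
    linarith
  -- final computation
  have hA : 0 ≤ SAvg T φ := SAvg_nonneg T φ
  set gφ : ℝ := SAvg T φ / |Real.log φ| with hgφdef
  have hgA : SAvg T φ = gφ * |Real.log φ| := (div_mul_cancel₀ _ hLφpos.ne').symm
  have hg0 : 0 ≤ gφ := div_nonneg hA (abs_nonneg _)
  rw [div_le_iff₀ hLpos]
  calc SMax T ε ≤ SAvg T φ + (Real.log 2 + 1) := key1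
    _ = gφ * (1 + δ) * |Real.log ε| + gφ * (1 + δ) * Real.log 3 + (Real.log 2 + 1) := by
        rw [hgA, hLφeq]; ring
    _ ≤ gφ * (1 + δ) * |Real.log ε| + gφ * (1 + δ) * (δ * |Real.log ε|)
        + δ * |Real.log ε| := by
        refine add_le_add (add_le_add le_rfl ?_) he4
        exact mul_le_mul_of_nonneg_left he3 (by positivity)
    _ = ((1 + δ) ^ 2 * gφ + δ) * |Real.log ε| := by ring
end F2sec

lemma eps_helper {a s : ℝ} (hs : 0 ≤ s)
    (h : ∀ δ : ℝ, 0 < δ → δ ≤ 1 → a ≤ (1 + δ) ^ 2 * s + δ) : a ≤ s := by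
  refine le_of_forall_pos_le_add fun η hη => ?_
  have h3 : (0 : ℝ) < 3 * s + 1 := by linarith
  set δ := min 1 (η / (3 * s + 1)) with hδdef
  have hδpos : 0 < δ := lt_min one_pos (div_pos hη h3)
  have hδ1 : δ ≤ 1 := min_le_left _ _
  have hδη : δ * (3 * s + 1) ≤ η := by
    rw [← le_div_iff₀ h3]; exact min_le_right _ _
  have h2 := h δ hδpos hδ1
  have hδ2 : δ ^ 2 ≤ δ := by nlinarith
  nlinarith

/-- Under tame growth of covering numbers, the upper and lower metric mean dimensions can
be computed using the time-averaged metrics `d̄_n` instead of the sup-metrics `d_n`. -/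
theorem mdim_eq_avg_of_tame_growth {𝒳 : Type*} [MetricSpace 𝒳] [CompactSpace 𝒳]
    (T : 𝒳 → 𝒳) (hT : Continuous T)
    (htame : ∀ δ : ℝ, 0 < δ →
      Tendsto (fun ε : ℝ => ε ^ δ * Real.log (coverNum 𝒳 dist ε)) (𝓝[>] (0 : ℝ)) (𝓝 0)) :
    Filter.limsup (fun ε : ℝ => SMax (𝒳 := 𝒳) T ε / |Real.log ε|) (𝓝[>] (0 : ℝ))
        = Filter.limsup (fun ε : ℝ => SAvg (𝒳 := 𝒳) T ε / |Real.log ε|) (𝓝[>] (0 : ℝ)) ∧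
      Filter.liminf (fun ε : ℝ => SMax (𝒳 := 𝒳) T ε / |Real.log ε|) (𝓝[>] (0 : ℝ))
        = Filter.liminf (fun ε : ℝ => SAvg (𝒳 := 𝒳) T ε / |Real.log ε|) (𝓝[>] (0 : ℝ)) := by
  rcases isEmpty_or_nonempty 𝒳 with hemp | hne
  · -- empty space : all cover numbers are 0, so SMax = SAvg everywhere
    have hcov : ∀ (ρ : 𝒳 → 𝒳 → ℝ) (s : ℝ), coverNum 𝒳 ρ s = 0 := by
      intro ρ s
      have h0 : 0 ∈ coverSet 𝒳 ρ s :=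
        ⟨Fin.elim0, fun i => i.elim0, fun x => (hemp.false x).elim, fun i => i.elim0⟩
      exact Nat.sInf_eq_zero.2 (Or.inl h0)
    have hSS : ∀ ε : ℝ, SMax (𝒳 := 𝒳) T ε = SAvg (𝒳 := 𝒳) T ε := by
      intro ε
      unfold SMax SAvg
      simp only [hcov]
    constructor <;> · simp only [hSS]
  · -- nonempty space
    set l := 𝓝[>] (0 : ℝ) with hldef
    set f : ℝ → ℝ := fun ε => SMax (𝒳 := 𝒳) T ε / |Real.log ε| with hfdef
    set g : ℝ → ℝ := fun ε => SAvg (𝒳 := 𝒳) T ε / |Real.log ε| with hgdef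
    have hgf : ∀ᶠ ε in l, 0 ≤ g ε ∧ g ε ≤ f ε := by
      filter_upwards [Ioo_mem_nhdsGT_of_mem ⟨le_refl (0 : ℝ), one_pos⟩] with ε hε
      have hLpos : 0 < |Real.log ε| := by
        rw [abs_of_neg (Real.log_neg hε.1 hε.2)]
        linarith [Real.log_neg hε.1 hε.2]
      refine ⟨div_nonneg (SAvg_nonneg T ε) (abs_nonneg _), ?_⟩
      exact (div_le_div_iff_of_pos_right hLpos).2 (SAvg_le_SMax hT hε.1)
    have hF2 : ∀ δ : ℝ, 0 < δ → ∀ᶠ ε in l, f ε ≤ (1 + δ) ^ 2 * g ((ε / 3) ^ (1 + δ)) + δ :=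
      fun δ hδ => F2 hT htame hδ
    have hmapφ : ∀ δ : ℝ, 0 < δ →
        Filter.map (fun ε : ℝ => (ε / 3) ^ (1 + δ)) l = l :=
      fun δ hδ => map_phi hδ
    -- transfer lemmas
    have hUp : ∀ δ : ℝ, 0 < δ → ∀ a : ℝ, (∀ᶠ ε in l, g ε ≤ a) →
        (∀ᶠ ε in l, f ε ≤ (1 + δ) ^ 2 * a + δ) := by
      intro δ hδ a hga
      have h1 : ∀ᶠ y in Filter.map (fun ε : ℝ => (ε / 3) ^ (1 + δ)) l, g y ≤ a := by
        rw [hmapφ δ hδ]; exact hga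
      have h2 : ∀ᶠ ε in l, g ((ε / 3) ^ (1 + δ)) ≤ a := Filter.eventually_map.1 h1
      filter_upwards [h2, hF2 δ hδ] with ε h2' hf2
      have : (1 + δ) ^ 2 * g ((ε / 3) ^ (1 + δ)) ≤ (1 + δ) ^ 2 * a :=
        mul_le_mul_of_nonneg_left h2' (by positivity)
      linarith
    have hDown : ∀ δ : ℝ, 0 < δ → ∀ a : ℝ, (∀ᶠ ε in l, a ≤ f ε) →
        (∀ᶠ ε in l, (a - δ) / (1 + δ) ^ 2 ≤ g ε) := by
      intro δ hδ a haf
      have h1 : ∀ᶠ ε in l, (a - δ) / (1 + δ) ^ 2 ≤ g ((ε / 3) ^ (1 + δ)) := by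
        filter_upwards [haf, hF2 δ hδ] with ε h1' h2'
        rw [div_le_iff₀ (by positivity : (0:ℝ) < (1 + δ) ^ 2)]
        nlinarith [h1', h2']
      have h2 : ∀ᶠ y in Filter.map (fun ε : ℝ => (ε / 3) ^ (1 + δ)) l,
          (a - δ) / (1 + δ) ^ 2 ≤ g y := Filter.eventually_map.2 h1
      rwa [hmapφ δ hδ] at h2
    constructor
    · -- limsup equality
      rw [Filter.limsup_eq, Filter.limsup_eq]
      have hUfsub : {a | ∀ᶠ ε in l, f ε ≤ a} ⊆ {a | ∀ᶠ ε in l, g ε ≤ a} :=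
        fun a ha => ((show ∀ᶠ ε in l, f ε ≤ a from ha).and hgf).mono
          fun ε h => h.2.2.trans h.1
      by_cases hUg : {a | ∀ᶠ ε in l, g ε ≤ a}.Nonempty
      · obtain ⟨b, hb⟩ := hUg
        have hUf_ne : {a | ∀ᶠ ε in l, f ε ≤ a}.Nonempty :=
          ⟨(1 + 1) ^ 2 * b + 1, hUp 1 one_pos b hb⟩
        have hUg_bdd : BddBelow {a | ∀ᶠ ε in l, g ε ≤ a} := by
          refine ⟨0, fun a ha => ?_⟩
          obtain ⟨ε, h1, h2⟩ := ((show ∀ᶠ ε in l, g ε ≤ a from ha).and hgf).exists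
          linarith [h2.1]
        have hUf_bdd : BddBelow {a | ∀ᶠ ε in l, f ε ≤ a} :=
          hUg_bdd.mono hUfsub
        refine le_antisymm ?_ (csInf_le_csInf hUg_bdd hUf_ne hUfsub)
        refine le_csInf ⟨b, hb⟩ fun a ha => ?_
        have ha0 : 0 ≤ a := by
          obtain ⟨ε, h1, h2⟩ := ((show ∀ᶠ ε in l, g ε ≤ a from ha).and hgf).exists
          linarith [h2.1]
        refine eps_helper ha0 fun δ hδ hδ1 => ?_
        exact csInf_le hUf_bdd (hUp δ hδ a ha)
      · have hUf : {a | ∀ᶠ ε in l, f ε ≤ a} = ∅ := by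
          rw [Set.not_nonempty_iff_eq_empty] at hUg
          exact Set.eq_empty_of_subset_empty (hUg ▸ hUfsub)
        rw [hUf, Set.not_nonempty_iff_eq_empty.1 hUg]
    · -- liminf equality
      rw [Filter.liminf_eq, Filter.liminf_eq]
      have hLsub : {a | ∀ᶠ ε in l, a ≤ g ε} ⊆ {a | ∀ᶠ ε in l, a ≤ f ε} :=
        fun a ha => ((show ∀ᶠ ε in l, a ≤ g ε from ha).and hgf).mono
          fun ε h => h.1.trans h.2.2
      have h0Lg : (0 : ℝ) ∈ {a | ∀ᶠ ε in l, a ≤ g ε} := hgf.mono fun ε h => h.1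
      by_cases hLf_bdd : BddAbove {a | ∀ᶠ ε in l, a ≤ f ε}
      · have hLg_bdd : BddAbove {a | ∀ᶠ ε in l, a ≤ g ε} := hLf_bdd.mono hLsub
        refine le_antisymm ?_ (csSup_le_csSup hLf_bdd ⟨0, h0Lg⟩ hLsub)
        refine csSup_le ⟨0, hLsub h0Lg⟩ fun a ha => ?_
        have hs0 : 0 ≤ sSup {a | ∀ᶠ ε in l, a ≤ g ε} := le_csSup hLg_bdd h0Lg
        refine eps_helper hs0 fun δ hδ hδ1 => ?_
        have hmem := hDown δ hδ a ha
        have hle : (a - δ) / (1 + δ) ^ 2 ≤ sSup {a | ∀ᶠ ε in l, a ≤ g ε} :=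
          le_csSup hLg_bdd hmem
        rw [div_le_iff₀ (by positivity : (0:ℝ) < (1 + δ) ^ 2)] at hle
        nlinarith [hle]
      · have hLg_unbdd : ¬ BddAbove {a | ∀ᶠ ε in l, a ≤ g ε} := by
          rintro ⟨M, hM⟩
          refine hLf_bdd ⟨(1 + 1) ^ 2 * M + 1, fun a ha => ?_⟩
          have hmem := hDown 1 one_pos a ha
          have := hM hmem
          nlinarith [this]
        rw [Real.sSup_of_not_bddAbove hLf_bdd, Real.sSup_of_not_bddAbove hLg_unbdd]
end
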